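/- Let Ω ⊂ ℝᵈ be a bounded domain. Suppose (u,w) is a subsolution pair on Ω̄ (continuous, with u ≥ 0, w ≥ 0, u ≥ ½w, w ≥ ½u, Δu ≥ 𝟙_{u>½w}, Δw ≥ 𝟙_{w>½u}) and (u',w') is a supersolution pair (continuous, with u' ≥ 0, w' ≥ 0, u' ≥ ½w', w' ≥ ½u', Δu' ≤ 1, Δw' ≤ 1). If u ≤ u' and w ≤ w' on ∂Ω, then u ≤ u' and w ≤ w' in Ω. -/

import Mathlib

open MeasureTheory Metric Filter
open scoped Convolution

noncomputable def lap {d : ℕ} (f : EuclideanSpace ℝ (Fin d) → ℝ) (x : EuclideanSpace ℝ (Fin d)) : ℝ :=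
  ∑ i : Fin d, fderiv ℝ (fun y => fderiv ℝ f y (EuclideanSpace.single i 1)) x (EuclideanSpace.single i 1)

/-- `Δu ≥ f` on `Ω` in the distributional sense. -/
def DistribLapGEOn {d : ℕ} (u f : EuclideanSpace ℝ (Fin d) → ℝ)
    (Ω : Set (EuclideanSpace ℝ (Fin d))) : Prop :=
  ∀ φ : EuclideanSpace ℝ (Fin d) → ℝ, ContDiff ℝ (⊤ : ℕ∞) φ → HasCompactSupport φ →
    tsupport φ ⊆ Ω → (∀ x, 0 ≤ φ x) → ∫ x, f x * φ x ≤ ∫ x, u x * lap φ x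

/-- `Δu ≤ f` on `Ω` in the distributional sense. -/
def DistribLapLEOn {d : ℕ} (u f : EuclideanSpace ℝ (Fin d) → ℝ)
    (Ω : Set (EuclideanSpace ℝ (Fin d))) : Prop :=
  ∀ φ : EuclideanSpace ℝ (Fin d) → ℝ, ContDiff ℝ (⊤ : ℕ∞) φ → HasCompactSupport φ →
    tsupport φ ⊆ Ω → (∀ x, 0 ≤ φ x) → ∫ x, u x * lap φ x ≤ ∫ x, f x * φ x

/-- The pointwise constraints `u ≥ 0`, `w ≥ 0`, `u ≥ ½w`, `w ≥ ½u` on `Ω`. -/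
def PairConstraint {d : ℕ} (u w : EuclideanSpace ℝ (Fin d) → ℝ)
    (Ω : Set (EuclideanSpace ℝ (Fin d))) : Prop :=
  ∀ x ∈ Ω, 0 ≤ u x ∧ 0 ≤ w x ∧ w x / 2 ≤ u x ∧ u x / 2 ≤ w x

/-- Subsolution pair for the system of obstacle problems. -/
def SubPair {d : ℕ} (u w : EuclideanSpace ℝ (Fin d) → ℝ)
    (Ω : Set (EuclideanSpace ℝ (Fin d))) : Prop :=
  PairConstraint u w Ω ∧
  DistribLapGEOn u (fun x => if w x / 2 < u x then 1 else 0) Ω ∧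
  DistribLapGEOn w (fun x => if u x / 2 < w x then 1 else 0) Ω

/-- Supersolution pair for the system of obstacle problems. -/
def SuperPair {d : ℕ} (u w : EuclideanSpace ℝ (Fin d) → ℝ)
    (Ω : Set (EuclideanSpace ℝ (Fin d))) : Prop :=
  PairConstraint u w Ω ∧
  DistribLapLEOn u (fun _ => 1) Ω ∧ DistribLapLEOn w (fun _ => 1) Ω

/-- Solution pair: both a subsolution and a supersolution pair. -/
def SolPair {d : ℕ} (u w : EuclideanSpace ℝ (Fin d) → ℝ)
    (Ω : Set (EuclideanSpace ℝ (Fin d))) : Prop :=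
  SubPair u w Ω ∧ SuperPair u w Ω

namespace StmtAux

variable {d : ℕ}

lemma one_le_t : (1 : WithTop ℕ∞) ≤ ((⊤ : ℕ∞) : WithTop ℕ∞) := by exact_mod_cast le_top

lemma ne_zero_t : ((⊤ : ℕ∞) : WithTop ℕ∞) ≠ 0 := by simp

lemma add_one_le_t {m : WithTop ℕ∞} : m + 1 ≤ ((⊤ : ℕ∞) : WithTop ℕ∞) → m ≤ ((⊤ : ℕ∞) : WithTop ℕ∞) := by
  intro h; exact le_trans (le_add_right le_rfl) h

lemma contDiff_fderiv_apply {f : EuclideanSpace ℝ (Fin d) → ℝ} (hf : ContDiff ℝ (⊤ : ℕ∞) f)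
    (v : EuclideanSpace ℝ (Fin d)) : ContDiff ℝ (⊤ : ℕ∞) fun y => fderiv ℝ f y v := by
  have h1 : ContDiff ℝ (⊤ : ℕ∞) (fderiv ℝ f) := hf.fderiv_right (by exact_mod_cast le_top)
  exact (ContinuousLinearMap.apply ℝ ℝ v).contDiff.comp h1

lemma hcs_fderiv_apply {f : EuclideanSpace ℝ (Fin d) → ℝ} (hf : HasCompactSupport f)
    (v : EuclideanSpace ℝ (Fin d)) : HasCompactSupport fun y => fderiv ℝ f y v := by
  have h1 : HasCompactSupport (fderiv ℝ f) := hf.fderiv ℝ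
  exact h1.comp_left (g := fun L : EuclideanSpace ℝ (Fin d) →L[ℝ] ℝ => L v) rfl

lemma continuous_lap {f : EuclideanSpace ℝ (Fin d) → ℝ} (hf : ContDiff ℝ (⊤ : ℕ∞) f) :
    Continuous (lap f) := by
  unfold lap
  refine continuous_finset_sum _ fun i _ => ?_
  exact ((contDiff_fderiv_apply (contDiff_fderiv_apply hf _) _).continuous)

lemma lap_add {f g : EuclideanSpace ℝ (Fin d) → ℝ} (hf : ContDiff ℝ (⊤ : ℕ∞) f) (hg : ContDiff ℝ (⊤ : ℕ∞) g)
    (x : EuclideanSpace ℝ (Fin d)) :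
    lap (fun y => f y + g y) x = lap f x + lap g x := by
  unfold lap
  rw [← Finset.sum_add_distrib]
  refine Finset.sum_congr rfl fun i _ => ?_
  have h1 : (fun y => fderiv ℝ (fun z => f z + g z) y (EuclideanSpace.single i 1)) =
      fun y => fderiv ℝ f y (EuclideanSpace.single i 1) + fderiv ℝ g y (EuclideanSpace.single i 1) := by
    funext y
    rw [fderiv_fun_add ((hf.differentiable ne_zero_t).differentiableAt)
      ((hg.differentiable ne_zero_t).differentiableAt)]
    simp
  rw [h1, fderiv_fun_add (((contDiff_fderiv_apply hf _).differentiable ne_zero_t).differentiableAt)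
    (((contDiff_fderiv_apply hg _).differentiable ne_zero_t).differentiableAt)]
  simp

lemma lap_const_mul {f : EuclideanSpace ℝ (Fin d) → ℝ} (hf : ContDiff ℝ (⊤ : ℕ∞) f) (c : ℝ)
    (x : EuclideanSpace ℝ (Fin d)) :
    lap (fun y => c * f y) x = c * lap f x := by
  unfold lap
  rw [Finset.mul_sum]
  refine Finset.sum_congr rfl fun i _ => ?_
  have h1 : (fun y => fderiv ℝ (fun z => c * f z) y (EuclideanSpace.single i 1)) =
      fun y => c * fderiv ℝ f y (EuclideanSpace.single i 1) := by
    funext y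
    rw [fderiv_const_mul ((hf.differentiable ne_zero_t).differentiableAt)]
    simp
  rw [h1, fderiv_const_mul (((contDiff_fderiv_apply hf _).differentiable ne_zero_t).differentiableAt)]
  simp

lemma lap_eq_zero_of_not_mem_tsupport {f : EuclideanSpace ℝ (Fin d) → ℝ}
    {y : EuclideanSpace ℝ (Fin d)} (hy : y ∉ tsupport f) : lap f y = 0 := by
  have hopen : IsOpen (tsupport f)ᶜ := (isClosed_tsupport f).isOpen_compl
  have hzero : ∀ z ∈ (tsupport f)ᶜ, ∀ v, fderiv ℝ f z v = 0 := by
    intro z hz v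
    have : f =ᶠ[nhds z] (fun _ => (0:ℝ)) := by
      filter_upwards [hopen.mem_nhds hz] with a ha
      exact image_eq_zero_of_notMem_tsupport ha
    rw [this.fderiv_eq, fderiv_fun_const]
    simp
  unfold lap
  refine Finset.sum_eq_zero fun i _ => ?_
  have : (fun z => fderiv ℝ f z (EuclideanSpace.single i 1)) =ᶠ[nhds y] (fun _ => (0:ℝ)) := by
    filter_upwards [hopen.mem_nhds hy] with a ha
    exact hzero a ha _
  rw [this.fderiv_eq, fderiv_fun_const]
  simp

noncomputable def qf (d : ℕ) : EuclideanSpace ℝ (Fin d) → ℝ := fun x => ∑ i, (x i)^2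

lemma qf_nonneg (x : EuclideanSpace ℝ (Fin d)) : 0 ≤ qf d x :=
  Finset.sum_nonneg fun i _ => sq_nonneg _

lemma qf_eq_norm_sq (x : EuclideanSpace ℝ (Fin d)) : qf d x = ‖x‖^2 := by
  rw [EuclideanSpace.norm_eq, Real.sq_sqrt (by positivity)]
  simp [qf, sq_abs]

lemma qf_contDiff : ContDiff ℝ (⊤ : ℕ∞) (qf d) := by
  refine ContDiff.sum fun i _ => ?_
  have : ContDiff ℝ (⊤ : ℕ∞) fun x : EuclideanSpace ℝ (Fin d) => (EuclideanSpace.proj (𝕜 := ℝ) i) x :=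
    (EuclideanSpace.proj (𝕜 := ℝ) i).contDiff
  exact this.pow 2

lemma qf_hasFDerivAt (x : EuclideanSpace ℝ (Fin d)) :
    HasFDerivAt (qf d) (∑ i, (2 * x i) • (EuclideanSpace.proj (𝕜 := ℝ) i)) x := by
  have h : ∀ i : Fin d, HasFDerivAt (fun x : EuclideanSpace ℝ (Fin d) => (x i)^2)
      ((2 * x i) • (EuclideanSpace.proj (𝕜 := ℝ) i)) x := by
    intro i
    have h1 : HasFDerivAt (fun x : EuclideanSpace ℝ (Fin d) => x i)
        (EuclideanSpace.proj (𝕜 := ℝ) i) x := (EuclideanSpace.proj (𝕜 := ℝ) i).hasFDerivAt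
    have := h1.mul h1
    have e : ((fun x : EuclideanSpace ℝ (Fin d) => x i) * fun x => x i) = fun x => (x i)^2 := by
      funext y; simp [sq]
    rw [e] at this
    refine this.congr_fderiv ?_
    ext v
    simp
    ring
  exact HasFDerivAt.fun_sum (fun i _ => h i)

lemma qf_fderiv_apply (x : EuclideanSpace ℝ (Fin d)) (j : Fin d) :
    fderiv ℝ (qf d) x (EuclideanSpace.single j 1) = 2 * x j := by
  rw [(qf_hasFDerivAt x).fderiv]
  simp only [ContinuousLinearMap.coe_sum', Finset.sum_apply, ContinuousLinearMap.coe_smul',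
    Pi.smul_apply, PiLp.proj_apply, smul_eq_mul]
  rw [Finset.sum_eq_single j]
  · simp
  · intro i _ hij
    rw [EuclideanSpace.single_apply]
    simp [hij, Ne.symm hij]
  · simp

lemma lap_qf (x : EuclideanSpace ℝ (Fin d)) : lap (qf d) x = 2 * d := by
  unfold lap
  have h1 : ∀ j : Fin d,
      fderiv ℝ (fun y => fderiv ℝ (qf d) y (EuclideanSpace.single j 1)) x (EuclideanSpace.single j 1)
        = 2 := by
    intro j
    have he : (fun y : EuclideanSpace ℝ (Fin d) => fderiv ℝ (qf d) y (EuclideanSpace.single j 1)) =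
        fun y => 2 * y j := by funext y; exact qf_fderiv_apply y j
    rw [he]
    have h2 : HasFDerivAt (fun y : EuclideanSpace ℝ (Fin d) => 2 * y j)
        ((2:ℝ) • (EuclideanSpace.proj (𝕜 := ℝ) j)) x := by
      exact ((EuclideanSpace.proj (𝕜 := ℝ) j).hasFDerivAt (x := x)).const_smul (2:ℝ)
    rw [h2.fderiv]
    simp only [ContinuousLinearMap.coe_smul', Pi.smul_apply, PiLp.proj_apply, smul_eq_mul,
      EuclideanSpace.single_apply]
    simp
  rw [Finset.sum_congr rfl fun j _ => h1 j]
  simp [mul_comm]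

/-- 1D second derivative test at a local max. -/

lemma second_deriv_nonpos {h h' : ℝ → ℝ} {c : ℝ}
    (hd : ∀ t, HasDerivAt h (h' t) t) (hd' : HasDerivAt h' c 0)
    (hmax : IsLocalMax h 0) : c ≤ 0 := by
  by_contra hc
  push_neg at hc
  have h'0 : h' 0 = 0 := by
    have : deriv h 0 = 0 := hmax.deriv_eq_zero
    rw [← (hd 0).deriv, this]
  have hslope : Tendsto (fun t => h' t / t) (nhdsWithin 0 (Set.Ioi 0)) (nhds c) := by
    have h1 := hasDerivAt_iff_tendsto_slope.mp hd'
    have hsub : Set.Ioi (0:ℝ) ⊆ {(0:ℝ)}ᶜ := fun t ht => ne_of_gt ht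
    have h2 := h1.mono_left (nhdsWithin_mono 0 hsub)
    refine h2.congr' ?_
    filter_upwards [self_mem_nhdsWithin] with t _
    simp [slope, h'0, div_eq_inv_mul]
  have hpos : ∀ᶠ t in nhdsWithin 0 (Set.Ioi 0), 0 < h' t := by
    have h3 := hslope.eventually (eventually_gt_nhds (by linarith : c/2 < c))
    filter_upwards [h3, self_mem_nhdsWithin] with t ht ht'
    have htpos : (0:ℝ) < t := ht'
    have : 0 < h' t / t := lt_trans (by linarith) ht
    exact (div_pos_iff.mp this).resolve_right (fun ⟨_, h⟩ => absurd htpos (not_lt.mpr h.le)) |>.1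
  have hmax' : ∀ᶠ t in nhdsWithin 0 (Set.Ioi 0), h t ≤ h 0 := hmax.filter_mono nhdsWithin_le_nhds
  have hall := hpos.and hmax'
  rw [eventually_iff, mem_nhdsGT_iff_exists_Ioo_subset] at hall
  obtain ⟨u, hu, hsub2⟩ := hall
  have hu0 : (0:ℝ) < u := hu
  have hmono : StrictMonoOn h (Set.Icc 0 (u/2)) := by
    refine strictMonoOn_of_deriv_pos (convex_Icc 0 (u/2))
      (fun t _ => (hd t).continuousAt.continuousWithinAt) ?_
    intro t ht
    rw [interior_Icc] at ht
    rw [(hd t).deriv]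
    exact (hsub2 ⟨ht.1, by linarith [ht.2]⟩).1
  have h1 : h 0 < h (u/2) := hmono (by constructor <;> linarith) (by constructor <;> linarith) (by linarith)
  have h2 : h (u/2) ≤ h 0 := (hsub2 ⟨by linarith, by linarith⟩).2
  linarith

/-- Second derivative test: at an interior local max of a smooth function, lap ≤ 0. -/

lemma lap_nonpos_of_isLocalMax {g : EuclideanSpace ℝ (Fin d) → ℝ} (hg : ContDiff ℝ (⊤ : ℕ∞) g)
    {x : EuclideanSpace ℝ (Fin d)} (hmax : IsLocalMax g x) : lap g x ≤ 0 := by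
  have key : ∀ i : Fin d,
      fderiv ℝ (fun y => fderiv ℝ g y (EuclideanSpace.single i 1)) x (EuclideanSpace.single i 1) ≤ 0 := by
    intro i
    set v : EuclideanSpace ℝ (Fin d) := EuclideanSpace.single i 1 with hv
    set G : EuclideanSpace ℝ (Fin d) → ℝ := fun y => fderiv ℝ g y v with hG
    have hGd : ContDiff ℝ (⊤ : ℕ∞) G := by
      have h1 : ContDiff ℝ (⊤ : ℕ∞) (fderiv ℝ g) := hg.fderiv_right (by exact_mod_cast le_top)
      exact (ContinuousLinearMap.apply ℝ ℝ v).contDiff.comp h1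
    set L : ℝ → EuclideanSpace ℝ (Fin d) := fun t => x + t • v with hL
    have hLd : ∀ t, HasDerivAt L v t := by
      intro t
      have := ((hasDerivAt_id t).smul_const v).const_add x
      simp only [id, one_smul] at this
      exact this
    have hL0 : L 0 = x := by simp [hL]
    -- h := g ∘ L
    have hd : ∀ t, HasDerivAt (fun t => g (L t)) (G (L t)) t := by
      intro t
      have h1 : HasFDerivAt g (fderiv ℝ g (L t)) (L t) :=
        ((hg.differentiable ne_zero_t) (L t)).hasFDerivAt
      exact h1.comp_hasDerivAt t (hLd t)
    have hd' : HasDerivAt (fun t => G (L t)) (fderiv ℝ G x v) 0 := by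
      have h1 : HasFDerivAt G (fderiv ℝ G (L 0)) (L 0) :=
        ((hGd.differentiable ne_zero_t) (L 0)).hasFDerivAt
      have := h1.comp_hasDerivAt 0 (hLd 0)
      rwa [hL0] at this
    have hmax' : IsLocalMax (fun t => g (L t)) 0 := by
      have hcont : ContinuousAt L 0 := (hLd 0).continuousAt
      have ht : Tendsto L (nhds 0) (nhds x) := hL0 ▸ hcont.tendsto
      have hev := ht.eventually hmax
      unfold IsLocalMax IsMaxFilter
      filter_upwards [hev] with t ht2
      simpa [hL0] using ht2
    exact second_deriv_nonpos hd hd' hmax'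
  exact Finset.sum_nonpos fun i _ => key i

lemma conv_fderiv_apply {V g : EuclideanSpace ℝ (Fin d) → ℝ}
    (hV : LocallyIntegrable V volume) (hg : ContDiff ℝ (⊤ : ℕ∞) g)
    (hcg : HasCompactSupport g) (v : EuclideanSpace ℝ (Fin d)) (x : EuclideanSpace ℝ (Fin d)) :
    fderiv ℝ (V ⋆[ContinuousLinearMap.lsmul ℝ ℝ] g) x v
      = (V ⋆[ContinuousLinearMap.lsmul ℝ ℝ] (fun y => fderiv ℝ g y v)) x := by
  have h1 := hcg.hasFDerivAt_convolution_right (ContinuousLinearMap.lsmul ℝ ℝ) hV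
    (hg.of_le one_le_t) x
  rw [h1.fderiv]
  exact convolution_precompR_apply _ hV (hcg.fderiv ℝ)
    ((hg.fderiv_right (m := (⊤:ℕ∞)) (by exact_mod_cast le_top)).continuous) x v

lemma fderiv_reflect {g : EuclideanSpace ℝ (Fin d) → ℝ} (hg : Differentiable ℝ g)
    (x y v : EuclideanSpace ℝ (Fin d)) :
    fderiv ℝ (fun z => g (x - z)) y v = - fderiv ℝ g (x - y) v := by
  have hL : HasFDerivAt (fun z : EuclideanSpace ℝ (Fin d) => x - z)
      (-(ContinuousLinearMap.id ℝ (EuclideanSpace ℝ (Fin d)))) y := by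
    simpa using (hasFDerivAt_id y).const_sub x
  have h2 : HasFDerivAt (fun z => g (x - z))
      ((fderiv ℝ g (x - y)).comp (-(ContinuousLinearMap.id ℝ (EuclideanSpace ℝ (Fin d))))) y :=
    (hg (x - y)).hasFDerivAt.comp y hL
  rw [h2.fderiv]
  simp

lemma contDiff_reflect {g : EuclideanSpace ℝ (Fin d) → ℝ} (hg : ContDiff ℝ (⊤ : ℕ∞) g)
    (x : EuclideanSpace ℝ (Fin d)) : ContDiff ℝ (⊤ : ℕ∞) (fun z => g (x - z)) :=
  hg.comp (contDiff_const.sub contDiff_id)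

lemma lap_reflect {g : EuclideanSpace ℝ (Fin d) → ℝ} (hg : ContDiff ℝ (⊤ : ℕ∞) g)
    (x y : EuclideanSpace ℝ (Fin d)) :
    lap (fun z => g (x - z)) y
      = ∑ i : Fin d, fderiv ℝ (fun z => fderiv ℝ g z (EuclideanSpace.single i 1)) (x - y)
          (EuclideanSpace.single i 1) := by
  unfold lap
  refine Finset.sum_congr rfl fun i _ => ?_
  set v := EuclideanSpace.single (𝕜 := ℝ) i (1:ℝ)
  set g1 : EuclideanSpace ℝ (Fin d) → ℝ := fun z => fderiv ℝ g z v with hg1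
  have hg1d : ContDiff ℝ (⊤ : ℕ∞) g1 := contDiff_fderiv_apply hg v
  have h1 : (fun z => fderiv ℝ (fun z' => g (x - z')) z v) = fun z => -(g1 (x - z)) := by
    funext z
    exact fderiv_reflect (hg.differentiable ne_zero_t) x z v
  rw [h1]
  have h2 : fderiv ℝ (fun z => -(g1 (x - z))) y v = - fderiv ℝ (fun z => g1 (x - z)) y v := by
    rw [fderiv_fun_neg]
    simp
  rw [h2, fderiv_reflect (hg1d.differentiable ne_zero_t) x y v, neg_neg]

lemma lap_conv {V ρ : EuclideanSpace ℝ (Fin d) → ℝ}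
    (hV : LocallyIntegrable V volume) (hρ : ContDiff ℝ (⊤ : ℕ∞) ρ)
    (hcρ : HasCompactSupport ρ) (x : EuclideanSpace ℝ (Fin d)) :
    lap (V ⋆[ContinuousLinearMap.lsmul ℝ ℝ] ρ) x
      = ∫ y, V y * lap (fun z => ρ (x - z)) y := by
  have hstep : ∀ i : Fin d,
      fderiv ℝ (fun y => fderiv ℝ (V ⋆[ContinuousLinearMap.lsmul ℝ ℝ] ρ) y
          (EuclideanSpace.single i 1)) x (EuclideanSpace.single i 1)
        = (V ⋆[ContinuousLinearMap.lsmul ℝ ℝ]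
            (fun z => fderiv ℝ (fun z' => fderiv ℝ ρ z' (EuclideanSpace.single i 1)) z
              (EuclideanSpace.single i 1))) x := by
    intro i
    set v := EuclideanSpace.single (𝕜 := ℝ) i (1:ℝ)
    set ρ1 : EuclideanSpace ℝ (Fin d) → ℝ := fun z => fderiv ℝ ρ z v
    have h1 : (fun y => fderiv ℝ (V ⋆[ContinuousLinearMap.lsmul ℝ ℝ] ρ) y v)
        = V ⋆[ContinuousLinearMap.lsmul ℝ ℝ] ρ1 := by
      funext y; exact conv_fderiv_apply hV hρ hcρ v y
    rw [h1]
    exact conv_fderiv_apply hV (contDiff_fderiv_apply hρ v) (hcs_fderiv_apply hcρ v) v x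
  unfold lap
  rw [Finset.sum_congr rfl fun i _ => hstep i]
  -- each convolution is an integral
  have hconv : ∀ i : Fin d, (V ⋆[ContinuousLinearMap.lsmul ℝ ℝ]
      (fun z => fderiv ℝ (fun z' => fderiv ℝ ρ z' (EuclideanSpace.single i 1)) z
        (EuclideanSpace.single i 1))) x
      = ∫ y, V y * (fun z => fderiv ℝ (fun z' => fderiv ℝ ρ z' (EuclideanSpace.single i 1)) z
          (EuclideanSpace.single i 1)) (x - y) := by
    intro i
    simp [convolution_def]
  rw [Finset.sum_congr rfl fun i _ => hconv i]
  have hInt : ∀ i : Fin d, Integrable (fun y => V y *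
      (fderiv ℝ (fun z' => fderiv ℝ ρ z' (EuclideanSpace.single i 1)) (x - y)
        (EuclideanSpace.single i 1))) volume := by
    intro i
    set v := EuclideanSpace.single (𝕜 := ℝ) i (1:ℝ)
    have h2 := (hcs_fderiv_apply (hcs_fderiv_apply hcρ v) v).convolutionExists_right
      (ContinuousLinearMap.lsmul ℝ ℝ) hV
      (contDiff_fderiv_apply (contDiff_fderiv_apply hρ v) v).continuous x
    simpa [ConvolutionExistsAt] using h2
  rw [← integral_finset_sum _ fun i _ => hInt i]
  congr 1
  funext y
  have hlr := lap_reflect hρ x y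
  unfold lap at hlr
  rw [hlr, Finset.mul_sum]

lemma conv_bump_le {V : EuclideanSpace ℝ (Fin d) → ℝ} (hV : Continuous V)
    (φb : ContDiffBump (0 : EuclideanSpace ℝ (Fin d))) {x : EuclideanSpace ℝ (Fin d)} {c : ℝ}
    (hb : ∀ y ∈ ball x φb.rOut, V y ≤ c) :
    (V ⋆[ContinuousLinearMap.lsmul ℝ ℝ] φb.normed volume) x ≤ c := by
  set ρ := φb.normed volume with hρ
  have hρc : Continuous ρ := φb.continuous_normed
  have hcs : HasCompactSupport ρ := φb.hasCompactSupport_normed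
  have hI : Integrable (fun y => V y * ρ (x - y)) volume := by
    have h0 := hcs.convolutionExists_right (ContinuousLinearMap.lsmul ℝ ℝ)
      (hV.locallyIntegrable (μ := volume)) hρc x
    simpa [ConvolutionExistsAt] using h0
  have hI2 : Integrable (fun y => ρ (x - y)) volume :=
    (integrable_comp_sub_left ρ x).mpr φb.integrable_normed
  have hpt : ∀ y, V y * ρ (x - y) ≤ c * ρ (x - y) := by
    intro y
    by_cases hy : y ∈ ball x φb.rOut
    · exact mul_le_mul_of_nonneg_right (hb y hy) (φb.nonneg_normed _)
    · have h1 : ρ (x - y) = 0 := by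
        have h2 : x - y ∉ Function.support ρ := by
          rw [hρ, φb.support_normed_eq]
          intro hmem
          exact hy (by simpa [mem_ball, dist_eq_norm, norm_sub_rev] using hmem)
        simpa using Function.notMem_support.mp h2
      rw [h1, mul_zero, mul_zero]
  calc (V ⋆[ContinuousLinearMap.lsmul ℝ ℝ] ρ) x = ∫ y, V y * ρ (x - y) := by
        simp [convolution_def]
    _ ≤ ∫ y, c * ρ (x - y) := integral_mono hI (hI2.const_mul c) hpt
    _ = c * ∫ y, ρ (x - y) := integral_const_mul _ _
    _ = c := by rw [integral_sub_left_eq_self ρ volume x, φb.integral_normed, mul_one]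

lemma conv_bump_ge {V : EuclideanSpace ℝ (Fin d) → ℝ} (hV : Continuous V)
    (φb : ContDiffBump (0 : EuclideanSpace ℝ (Fin d))) {x : EuclideanSpace ℝ (Fin d)} {c : ℝ}
    (hb : ∀ y ∈ ball x φb.rOut, c ≤ V y) :
    c ≤ (V ⋆[ContinuousLinearMap.lsmul ℝ ℝ] φb.normed volume) x := by
  set ρ := φb.normed volume with hρ
  have hρc : Continuous ρ := φb.continuous_normed
  have hcs : HasCompactSupport ρ := φb.hasCompactSupport_normed
  have hI : Integrable (fun y => V y * ρ (x - y)) volume := by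
    have h0 := hcs.convolutionExists_right (ContinuousLinearMap.lsmul ℝ ℝ)
      (hV.locallyIntegrable (μ := volume)) hρc x
    simpa [ConvolutionExistsAt] using h0
  have hI2 : Integrable (fun y => ρ (x - y)) volume :=
    (integrable_comp_sub_left ρ x).mpr φb.integrable_normed
  have hpt : ∀ y, c * ρ (x - y) ≤ V y * ρ (x - y) := by
    intro y
    by_cases hy : y ∈ ball x φb.rOut
    · exact mul_le_mul_of_nonneg_right (hb y hy) (φb.nonneg_normed _)
    · have h1 : ρ (x - y) = 0 := by
        have h2 : x - y ∉ Function.support ρ := by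
          rw [hρ, φb.support_normed_eq]
          intro hmem
          exact hy (by simpa [mem_ball, dist_eq_norm, norm_sub_rev] using hmem)
        simpa using Function.notMem_support.mp h2
      rw [h1, mul_zero, mul_zero]
  calc c = c * ∫ y, ρ (x - y) := by
        rw [integral_sub_left_eq_self ρ volume x, φb.integral_normed, mul_one]
    _ = ∫ y, c * ρ (x - y) := (integral_const_mul _ _).symm
    _ ≤ ∫ y, V y * ρ (x - y) := integral_mono (hI2.const_mul c) hI hpt
    _ = (V ⋆[ContinuousLinearMap.lsmul ℝ ℝ] ρ) x := by simp [convolution_def]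

lemma tsupport_reflect_bump (φb : ContDiffBump (0 : EuclideanSpace ℝ (Fin d)))
    (x : EuclideanSpace ℝ (Fin d)) :
    tsupport (fun z => φb.normed volume (x - z)) ⊆ closedBall x φb.rOut := by
  have h1 : Function.support (fun z => φb.normed volume (x - z)) ⊆ ball x φb.rOut := by
    intro z hz
    have h2 : x - z ∈ Function.support (φb.normed volume) := hz
    rw [φb.support_normed_eq] at h2
    simpa [mem_ball, dist_eq_norm, norm_sub_rev] using h2
  calc tsupport (fun z => φb.normed volume (x - z)) ⊆ closure (ball x φb.rOut) :=
        closure_mono h1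
    _ ⊆ closedBall x φb.rOut := closure_ball_subset_closedBall

lemma hcs_reflect_bump (φb : ContDiffBump (0 : EuclideanSpace ℝ (Fin d)))
    (x : EuclideanSpace ℝ (Fin d)) :
    HasCompactSupport (fun z => φb.normed volume (x - z)) :=
by
  apply HasCompactSupport.intro (isCompact_closedBall x φb.rOut)
  intro z hz
  apply image_eq_zero_of_notMem_tsupport
  rw [φb.tsupport_normed_eq]
  intro hmem
  exact hz (by simpa [mem_closedBall, dist_eq_norm, norm_sub_rev] using hmem)

/-- Weak maximum principle for continuous distributionally subharmonic functions. -/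
lemma maxp (hd : 0 < d) {U : Set (EuclideanSpace ℝ (Fin d))} (hUo : IsOpen U)
    (hUb : Bornology.IsBounded U) {V : EuclideanSpace ℝ (Fin d) → ℝ} (hV : Continuous V)
    (hsub : ∀ φ : EuclideanSpace ℝ (Fin d) → ℝ, ContDiff ℝ (⊤ : ℕ∞) φ → HasCompactSupport φ →
      tsupport φ ⊆ U → (∀ z, 0 ≤ φ z) → 0 ≤ ∫ y, V y * lap φ y)
    {x : EuclideanSpace ℝ (Fin d)} (hx : x ∈ U) : ∃ y ∈ frontier U, V x ≤ V y := by
  haveI : Nonempty (Fin d) := ⟨⟨0, hd⟩⟩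
  haveI : Nontrivial (EuclideanSpace ℝ (Fin d)) := inferInstance
  have hUne : U.Nonempty := ⟨x, hx⟩
  have hUc_ne : (Uᶜ : Set (EuclideanSpace ℝ (Fin d))).Nonempty := by
    by_contra h
    rw [Set.not_nonempty_iff_eq_empty, Set.compl_empty_iff] at h
    exact NormedSpace.unbounded_univ ℝ (EuclideanSpace ℝ (Fin d)) (h ▸ hUb)
  have hfr_ne : (frontier U).Nonempty := by
    by_contra h
    rw [Set.not_nonempty_iff_eq_empty] at h
    rcases isClopen_iff.mp (isClopen_iff_frontier_eq_empty.mpr h) with h1 | h1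
    · exact hUne.ne_empty h1
    · exact NormedSpace.unbounded_univ ℝ (EuclideanSpace ℝ (Fin d)) (h1 ▸ hUb)
  have hKc : IsCompact (closure U) := hUb.isCompact_closure
  have hfr_comp : IsCompact (frontier U) :=
    hKc.of_isClosed_subset isClosed_frontier frontier_subset_closure
  obtain ⟨y₀, hy₀fr, hy₀max⟩ := hfr_comp.exists_isMaxOn hfr_ne hV.continuousOn
  obtain ⟨z₀, hz₀cl, hz₀max⟩ := hKc.exists_isMaxOn hUne.closure hV.continuousOn
  set M := V z₀ with hM
  set m := V y₀ with hm
  suffices hMm : M ≤ m by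
    exact ⟨y₀, hy₀fr, le_trans (isMaxOn_iff.mp hz₀max x (subset_closure hx)) hMm⟩
  by_cases hz₀U : z₀ ∈ U
  swap
  · exact isMaxOn_iff.mp hy₀max z₀ (hUo.frontier_eq ▸ ⟨hz₀cl, hz₀U⟩)
  -- bound for qf on closure U
  obtain ⟨R0, hR0⟩ := (isBounded_iff_subset_closedBall (0 : EuclideanSpace ℝ (Fin d))).mp hUb
  have hR0nn : 0 ≤ R0 := le_trans (norm_nonneg x) (by simpa [mem_closedBall, dist_eq_norm] using hR0 hx)
  set B := R0 ^ 2 with hB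
  have hBnn : 0 ≤ B := by positivity
  have hqB : ∀ y ∈ closure U, qf d y ≤ B := by
    intro y hy
    have h1 : y ∈ closedBall (0 : EuclideanSpace ℝ (Fin d)) R0 :=
      closure_minimal hR0 Metric.isClosed_closedBall hy
    have h2 : ‖y‖ ≤ R0 := by simpa [mem_closedBall, dist_eq_norm] using h1
    rw [qf_eq_norm_sq]
    exact pow_le_pow_left₀ (norm_nonneg _) h2 2
  refine le_of_forall_pos_le_add fun κ hκ => ?_
  set η := κ / 3 with hη
  have hηpos : 0 < η := by positivity
  set δ := κ / (3 * (B + 1)) with hδ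
  have hδpos : 0 < δ := by positivity
  -- continuity at z₀
  have hc₁ex : ∃ c₁ > 0, ∀ y, dist y z₀ < c₁ → M - η < V y := by
    have hSop : IsOpen (V ⁻¹' Set.Ioi (M - η)) := isOpen_Ioi.preimage hV
    have hz₀S : z₀ ∈ V ⁻¹' Set.Ioi (M - η) := by
      simp only [Set.mem_preimage, Set.mem_Ioi]; linarith
    obtain ⟨c₁, hc₁pos, hball⟩ := Metric.isOpen_iff.mp hSop z₀ hz₀S
    exact ⟨c₁, hc₁pos, fun y hy => hball (mem_ball.mpr hy)⟩
  obtain ⟨c₁, hc₁pos, hc₁⟩ := hc₁ex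
  -- separation near the boundary
  have hc₂ex : ∃ c₂ > 0, ∀ y ∈ closure U, infDist y Uᶜ < c₂ → V y ≤ m + η := by
    set A := closure U ∩ V ⁻¹' Set.Ici (m + η) with hA
    have hAcl : IsClosed A := isClosed_closure.inter (isClosed_Ici.preimage hV)
    have hAcomp : IsCompact A := hKc.of_isClosed_subset hAcl Set.inter_subset_left
    rcases A.eq_empty_or_nonempty with hAe | hAne
    · refine ⟨1, one_pos, fun y hy _ => ?_⟩
      by_contra h
      push_neg at h
      exact (Set.eq_empty_iff_forall_notMem.mp hAe y) ⟨hy, le_of_lt h⟩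
    · obtain ⟨a, haA, hamin⟩ := hAcomp.exists_isMinOn hAne (continuous_infDist_pt _).continuousOn
      have haU : a ∈ U := by
        by_contra haU
        have hafr : a ∈ frontier U := hUo.frontier_eq ▸ ⟨haA.1, haU⟩
        have h1 : V a ≤ m := isMaxOn_iff.mp hy₀max a hafr
        have h2 : m + η ≤ V a := haA.2
        linarith
      have hapos : 0 < infDist a Uᶜ := by
        rw [← hUo.isClosed_compl.notMem_iff_infDist_pos hUc_ne]
        simpa using haU
      refine ⟨infDist a Uᶜ, hapos, fun y hy hdist => ?_⟩
      by_contra h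
      push_neg at h
      exact absurd (isMinOn_iff.mp hamin y ⟨hy, le_of_lt h⟩) (not_le.mpr hdist)
  obtain ⟨c₂, hc₂pos, hc₂⟩ := hc₂ex
  set r := infDist z₀ Uᶜ with hr
  have hrpos : 0 < r := by
    rw [hr, ← hUo.isClosed_compl.notMem_iff_infDist_pos hUc_ne]
    simpa using hz₀U
  set ε := min (min c₁ r) (c₂ / 2) / 2 with hε
  have hεpos : 0 < ε := by positivity
  have hεc₁ : ε < c₁ := by
    have : min (min c₁ r) (c₂ / 2) ≤ c₁ := le_trans (min_le_left _ _) (min_le_left _ _)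
    linarith
  have hεr : ε < r := by
    have : min (min c₁ r) (c₂ / 2) ≤ r := le_trans (min_le_left _ _) (min_le_right _ _)
    linarith
  have hεc₂ : 2 * ε < c₂ := by
    have : min (min c₁ r) (c₂ / 2) ≤ c₂ / 2 := min_le_right _ _
    linarith
  set φb : ContDiffBump (0 : EuclideanSpace ℝ (Fin d)) :=
    ⟨ε / 2, ε, by positivity, by linarith⟩ with hφb
  have hrOut : φb.rOut = ε := rfl
  set ρ := φb.normed volume with hρdef
  set ve := V ⋆[ContinuousLinearMap.lsmul ℝ ℝ] ρ with hve
  have hvec : ContDiff ℝ (⊤ : ℕ∞) ve :=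
    φb.hasCompactSupport_normed.contDiff_convolution_right _
      (hV.locallyIntegrable (μ := volume)) φb.contDiff_normed
  set g := fun y => ve y + δ * qf d y with hg
  have hgc : ContDiff ℝ (⊤ : ℕ∞) g := hvec.add (contDiff_const.mul qf_contDiff)
  set R' := {y : EuclideanSpace ℝ (Fin d) | ε < infDist y Uᶜ} with hR'
  have hR'o : IsOpen R' := isOpen_lt continuous_const (continuous_infDist_pt _)
  have hR'U : R' ⊆ U := by
    intro y hy
    by_contra h
    have h0 : infDist y Uᶜ = 0 := infDist_zero_of_mem (by simpa using h)
    have : ε < infDist y Uᶜ := hy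
    rw [h0] at this
    linarith
  have hz₀R' : z₀ ∈ R' := hεr
  have hclR' : closure R' ⊆ {y | ε ≤ infDist y Uᶜ} := by
    apply closure_minimal ?_ (isClosed_le continuous_const (continuous_infDist_pt _))
    intro y hy
    have h1 : ε < infDist y Uᶜ := hy
    exact le_of_lt h1
  have hclR'U : closure R' ⊆ closure U := closure_mono hR'U
  have hcompR' : IsCompact (closure R') := hKc.of_isClosed_subset isClosed_closure hclR'U
  obtain ⟨xs, hxscl, hxsmax⟩ :=
    hcompR'.exists_isMaxOn ⟨z₀, subset_closure hz₀R'⟩ hgc.continuous.continuousOn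
  have hballU : ∀ z : EuclideanSpace ℝ (Fin d), ε ≤ infDist z Uᶜ →
      ∀ y ∈ ball z ε, y ∈ U := by
    intro z hz y hy
    have h4 : infDist z Uᶜ ≤ infDist y Uᶜ + dist z y := infDist_le_infDist_add_dist
    have h6 : dist z y < ε := by rw [dist_comm]; exact mem_ball.mp hy
    have h7 : 0 < infDist y Uᶜ := by linarith
    by_contra hyU
    rw [infDist_zero_of_mem (by simpa using hyU)] at h7
    linarith
  by_cases hxsR' : xs ∈ R'
  · exfalso
    have hlm : IsLocalMax g xs :=
      hxsmax.isLocalMax (Filter.mem_of_superset (hR'o.mem_nhds hxsR') subset_closure)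
    have h1 : lap g xs ≤ 0 := lap_nonpos_of_isLocalMax hgc hlm
    have h2 : lap g xs = lap ve xs + δ * (2 * d) := by
      rw [hg]
      rw [lap_add hvec (contDiff_const.mul qf_contDiff) xs,
        lap_const_mul qf_contDiff δ xs, lap_qf]
    have h3 : 0 ≤ lap ve xs := by
      rw [hve, lap_conv (hV.locallyIntegrable (μ := volume)) φb.contDiff_normed
        φb.hasCompactSupport_normed xs]
      refine hsub (fun z => ρ (xs - z)) (contDiff_reflect φb.contDiff_normed xs)
        (hcs_reflect_bump φb xs) ?_ (fun z => φb.nonneg_normed _)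
      refine (tsupport_reflect_bump φb xs).trans ?_
      intro y hy
      have h6 : dist xs y ≤ ε := by
        rw [dist_comm]
        simpa [hrOut] using mem_closedBall.mp hy
      have h5 : ε < infDist xs Uᶜ := hxsR'
      have h4 : infDist xs Uᶜ ≤ infDist y Uᶜ + dist xs y := infDist_le_infDist_add_dist
      have h7 : 0 < infDist y Uᶜ := by linarith
      by_contra hyU
      rw [infDist_zero_of_mem (by simpa using hyU)] at h7
      linarith
    have hδd : 0 < δ * (2 * d) := by
      have hd' : (0:ℝ) < 2 * d := by
        have : (0:ℝ) < (d:ℝ) := by exact_mod_cast hd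
        linarith
      exact mul_pos hδpos hd'
    linarith
  · have hxsε : infDist xs Uᶜ = ε := le_antisymm (not_lt.mp hxsR') (hclR' hxscl)
    have hlow : M - η ≤ ve z₀ := by
      refine conv_bump_ge hV φb ?_
      intro y hy
      refine le_of_lt (hc₁ y ?_)
      have : dist y z₀ < ε := by simpa [hrOut] using mem_ball.mp hy
      linarith
    have hup : ve xs ≤ m + η := by
      refine conv_bump_le hV φb ?_
      intro y hy
      have hy' : y ∈ ball xs ε := by simpa [hrOut] using hy
      have hyU : y ∈ U := hballU xs (le_of_eq hxsε.symm) y hy'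
      have hdy : infDist y Uᶜ < c₂ := by
        have h4 : infDist y Uᶜ ≤ infDist xs Uᶜ + dist y xs := infDist_le_infDist_add_dist
        have h5 : dist y xs < ε := mem_ball.mp hy'
        rw [hxsε] at h4
        linarith
      exact hc₂ y (subset_closure hyU) hdy
    have hchain : g z₀ ≤ g xs := isMaxOn_iff.mp hxsmax z₀ (subset_closure hz₀R')
    have hq1 : 0 ≤ qf d z₀ := qf_nonneg z₀
    have hq2 : qf d xs ≤ B := hqB xs (hclR'U hxscl)
    have hfinal : M - η ≤ m + η + δ * B := by
      have e1 : M - η + δ * 0 ≤ ve z₀ + δ * qf d z₀ := by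
        have := mul_le_mul_of_nonneg_left hq1 (le_of_lt hδpos)
        linarith
      have e2 : ve xs + δ * qf d xs ≤ m + η + δ * B := by
        have := mul_le_mul_of_nonneg_left hq2 (le_of_lt hδpos)
        linarith
      calc M - η = M - η + δ * 0 := by ring
        _ ≤ ve z₀ + δ * qf d z₀ := e1
        _ = g z₀ := rfl
        _ ≤ g xs := hchain
        _ = ve xs + δ * qf d xs := rfl
        _ ≤ m + η + δ * B := e2
    have hδB : δ * B ≤ κ / 3 := by
      rw [hδ]
      rw [div_mul_eq_mul_div, div_le_div_iff₀ (by positivity) (by norm_num)]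
      nlinarith
    linarith


end StmtAux

namespace StmtAux

variable {d : ℕ}

lemma key (hd : 0 < d) {Ω : Set (EuclideanSpace ℝ (Fin d))} (hΩ : IsOpen Ω)
    (hbdd : Bornology.IsBounded Ω) {u w u' w' : EuclideanSpace ℝ (Fin d) → ℝ}
    (hu : ContinuousOn u (closure Ω)) (hw : ContinuousOn w (closure Ω))
    (hu' : ContinuousOn u' (closure Ω))
    (hcon' : ∀ x ∈ Ω, w' x / 2 ≤ u' x)
    (hlapu : DistribLapGEOn u (fun x => if w x / 2 < u x then 1 else 0) Ω)
    (hlapu' : DistribLapLEOn u' (fun _ => 1) Ω)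
    (hbdry : ∀ x ∈ frontier Ω, u x ≤ u' x)
    {z : EuclideanSpace ℝ (Fin d)} (hz : z ∈ closure Ω)
    (hzmax : ∀ y ∈ closure Ω, u y - u' y ≤ u z - u' z)
    (hz2 : ∀ y ∈ Ω, w y - w' y ≤ u z - u' z)
    (hpos : 0 < u z - u' z) : False := by
  set M := u z - u' z with hMdef
  have hzΩ : z ∈ Ω := by
    by_contra h
    have hfr : z ∈ frontier Ω := hΩ.frontier_eq ▸ ⟨hz, h⟩
    have := hbdry z hfr
    linarith
  have hstrict : ∀ y ∈ Ω, u y - u' y = M → w y / 2 < u y := by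
    intro y hyΩ hyeq
    by_contra h
    push_neg at h
    have h1 : w' y / 2 ≤ u' y := hcon' y hyΩ
    have h2 : w y - w' y ≤ M := hz2 y hyΩ
    have : M ≤ w y / 2 - w' y / 2 := by rw [← hyeq]; linarith
    linarith
  set U := Ω ∩ {x | w x / 2 < u x} with hUdef
  have hUΩ : U ⊆ Ω := Set.inter_subset_left
  have hUo : IsOpen U := by
    have h1 : ContinuousOn (fun x => u x - w x / 2) Ω :=
      (hu.mono subset_closure).sub ((hw.mono subset_closure).div_const 2)
    have h2 := h1.isOpen_inter_preimage hΩ (isOpen_Ioi (a := (0:ℝ)))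
    have h3 : Ω ∩ (fun x => u x - w x / 2) ⁻¹' Set.Ioi 0 = U := by
      ext y
      simp only [Set.mem_inter_iff, Set.mem_preimage, Set.mem_Ioi, hUdef, Set.mem_setOf_eq]
      constructor
      · rintro ⟨h4, h5⟩; exact ⟨h4, by linarith⟩
      · rintro ⟨h4, h5⟩; exact ⟨h4, by linarith⟩
    rwa [h3] at h2
  have hzU : z ∈ U := ⟨hzΩ, hstrict z hzΩ rfl⟩
  -- Tietze extension of u - u'
  obtain ⟨Vc, hVrestrict⟩ := ContinuousMap.exists_restrict_eq (Y := ℝ) isClosed_closure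
    ⟨_, (hu.sub hu').restrict⟩
  set V : EuclideanSpace ℝ (Fin d) → ℝ := ⇑Vc with hVdef
  have hVeq : ∀ y ∈ closure Ω, V y = u y - u' y := by
    intro y hy
    have := DFunLike.congr_fun hVrestrict (⟨y, hy⟩ : closure Ω)
    simpa using this
  have hVc : Continuous V := Vc.continuous
  have hsubV : ∀ φ : EuclideanSpace ℝ (Fin d) → ℝ, ContDiff ℝ (⊤ : ℕ∞) φ →
      HasCompactSupport φ → tsupport φ ⊆ U → (∀ z, 0 ≤ φ z) → 0 ≤ ∫ y, V y * lap φ y := by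
    intro φ hφ1 hφ2 hφ3 hφ4
    have hφΩ : tsupport φ ⊆ Ω := hφ3.trans hUΩ
    have hlapcont : Continuous (lap φ) := continuous_lap hφ1
    have hcsmul : ∀ f : EuclideanSpace ℝ (Fin d) → ℝ, ContinuousOn f (closure Ω) →
        Continuous (fun y => f y * lap φ y) ∧ HasCompactSupport (fun y => f y * lap φ y) := by
      intro f hf
      constructor
      · rw [continuous_iff_continuousAt]
        intro y
        by_cases hy : y ∈ tsupport φ
        · have hyΩ : y ∈ Ω := hφΩ hy
          have h1 : ContinuousAt f y := hf.continuousAt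
            (Filter.mem_of_superset (hΩ.mem_nhds hyΩ) subset_closure)
          exact h1.mul hlapcont.continuousAt
        · have hev : (fun y => f y * lap φ y) =ᶠ[nhds y] (fun _ => (0:ℝ)) := by
            filter_upwards [(isClosed_tsupport φ).isOpen_compl.mem_nhds hy] with a ha
            rw [lap_eq_zero_of_not_mem_tsupport ha, mul_zero]
          exact (continuousAt_const (y := (0:ℝ))).congr hev.symm
      · apply HasCompactSupport.intro hφ2
        intro y hy
        rw [lap_eq_zero_of_not_mem_tsupport hy, mul_zero]
    obtain ⟨hc1, hc2⟩ := hcsmul u hu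
    obtain ⟨hc1', hc2'⟩ := hcsmul u' hu'
    have hIu : Integrable (fun y => u y * lap φ y) volume :=
      hc1.integrable_of_hasCompactSupport hc2
    have hIu' : Integrable (fun y => u' y * lap φ y) volume :=
      hc1'.integrable_of_hasCompactSupport hc2'
    have h1 := hlapu φ hφ1 hφ2 hφΩ hφ4
    have h1' : (∫ y, (if w y / 2 < u y then (1:ℝ) else 0) * φ y) = ∫ y, φ y := by
      congr 1
      funext y
      by_cases hy : φ y = 0
      · rw [hy, mul_zero]
      · have hyU : y ∈ U := hφ3 (subset_tsupport φ (Function.mem_support.mpr hy))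
        have hlt : w y / 2 < u y := hyU.2
        rw [if_pos hlt, one_mul]
    have h2 := hlapu' φ hφ1 hφ2 hφΩ hφ4
    have h2' : (∫ y, (1:ℝ) * φ y) = ∫ y, φ y := by simp
    have h3 : ∫ y, V y * lap φ y = (∫ y, u y * lap φ y) - ∫ y, u' y * lap φ y := by
      rw [← integral_sub hIu hIu']
      congr 1
      funext y
      by_cases hy : y ∈ tsupport φ
      · have hyΩ : y ∈ closure Ω := subset_closure (hφΩ hy)
        rw [hVeq y hyΩ]
        ring
      · rw [lap_eq_zero_of_not_mem_tsupport hy]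
        ring
    rw [h3]
    rw [h1'] at h1
    rw [h2'] at h2
    linarith
  obtain ⟨y, hyfr, hVzy⟩ := maxp hd hUo (hbdd.subset hUΩ) hVc hsubV hzU
  have hyclU : y ∈ closure U := frontier_subset_closure hyfr
  have hyclΩ : y ∈ closure Ω := (closure_mono hUΩ) hyclU
  have hynotU : y ∉ U := (hUo.frontier_eq ▸ hyfr).2
  have hVz : V z = M := by rw [hVeq z hz]
  have hVy : V y = u y - u' y := hVeq y hyclΩ
  have h5 : u y - u' y ≤ M := hzmax y hyclΩ
  have heq : u y - u' y = M := le_antisymm h5 (by rw [← hVy, ← hVz]; exact hVzy)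
  have hyΩ : y ∈ Ω := by
    by_contra h
    have hfr : y ∈ frontier Ω := hΩ.frontier_eq ▸ ⟨hyclΩ, h⟩
    have := hbdry y hfr
    linarith
  exact hynotU ⟨hyΩ, hstrict y hyΩ heq⟩

end StmtAux

/-- Comparison principle between a subsolution pair and a supersolution pair on a
bounded domain. -/
theorem stmt3 (d : ℕ) (Ω : Set (EuclideanSpace ℝ (Fin d)))
    (hΩ : IsOpen Ω) (hconn : IsConnected Ω) (hbdd : Bornology.IsBounded Ω)
    (u w u' w' : EuclideanSpace ℝ (Fin d) → ℝ)
    (hu : ContinuousOn u (closure Ω)) (hw : ContinuousOn w (closure Ω))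
    (hu' : ContinuousOn u' (closure Ω)) (hw' : ContinuousOn w' (closure Ω))
    (hsub : SubPair u w Ω) (hsup : SuperPair u' w' Ω)
    (hbdry : ∀ x ∈ frontier Ω, u x ≤ u' x ∧ w x ≤ w' x) :
    ∀ x ∈ Ω, u x ≤ u' x ∧ w x ≤ w' x := by
  rcases Nat.eq_zero_or_pos d with hd0 | hd
  · -- dimension 0 : the domain is a single point
    subst hd0
    haveI hss : Subsingleton (EuclideanSpace ℝ (Fin 0)) :=
      ⟨fun a b => PiLp.ext fun i => i.elim0⟩
    haveI : Finite (EuclideanSpace ℝ (Fin 0)) := Finite.of_subsingleton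
    haveI : CompactSpace (EuclideanSpace ℝ (Fin 0)) := Finite.compactSpace
    intro x hx
    have hΩuniv : ∀ y, y ∈ Ω := fun y => (Subsingleton.elim x y) ▸ hx
    have hlap0 : ∀ (ψ : EuclideanSpace ℝ (Fin 0) → ℝ) y, lap ψ y = 0 := by
      intro ψ y
      simp [lap]
    set φ : EuclideanSpace ℝ (Fin 0) → ℝ := fun _ => 1 with hφdef
    have hφ1 : ContDiff ℝ (⊤ : ℕ∞) φ := contDiff_const
    have hφ2 : HasCompactSupport φ := (isClosed_tsupport φ).isCompact
    have hφ3 : tsupport φ ⊆ Ω := fun y _ => hΩuniv y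
    have hφ4 : ∀ z, 0 ≤ φ z := fun z => zero_le_one
    have htpos : 0 < (volume (Set.univ : Set (EuclideanSpace ℝ (Fin 0)))).toReal := by
      refine ENNReal.toReal_pos ?_ ?_
      · exact (isOpen_univ.measure_pos volume ⟨x, trivial⟩).ne'
      · exact (isCompact_univ.measure_lt_top).ne
    have hconst : ∀ c : ℝ, (∫ _y : EuclideanSpace ℝ (Fin 0), c) =
        (volume (Set.univ : Set (EuclideanSpace ℝ (Fin 0)))).toReal * c := by
      intro c
      rw [integral_const]
      simp [smul_eq_mul, Measure.real]
    have hzero : ∀ f : EuclideanSpace ℝ (Fin 0) → ℝ, (∫ y, f y * lap φ y) = 0 := by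
      intro f
      have : (fun y => f y * lap φ y) = fun _ => (0:ℝ) := by
        funext y
        rw [hlap0, mul_zero]
      rw [this]
      simp
    have hub : u x ≤ w x / 2 := by
      have h1 := hsub.2.1 φ hφ1 hφ2 hφ3 hφ4
      rw [hzero] at h1
      have h2 : (fun y => (if w y / 2 < u y then (1:ℝ) else 0) * φ y) =
          fun _ => (if w x / 2 < u x then (1:ℝ) else 0) := by
        funext y
        rw [Subsingleton.elim y x]
        simp [hφdef]
      rw [h2, hconst] at h1
      by_contra h
      push_neg at h
      rw [if_pos h, mul_one] at h1
      linarith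
    have hwb : w x ≤ u x / 2 := by
      have h1 := hsub.2.2 φ hφ1 hφ2 hφ3 hφ4
      rw [hzero] at h1
      have h2 : (fun y => (if u y / 2 < w y then (1:ℝ) else 0) * φ y) =
          fun _ => (if u x / 2 < w x then (1:ℝ) else 0) := by
        funext y
        rw [Subsingleton.elim y x]
        simp [hφdef]
      rw [h2, hconst] at h1
      by_contra h
      push_neg at h
      rw [if_pos h, mul_one] at h1
      linarith
    obtain ⟨hu0, hw0, huw, hwu⟩ := hsub.1 x hx
    obtain ⟨hu'0, hw'0, _, _⟩ := hsup.1 x hx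
    have hu_eq : u x = 0 := by linarith
    have hw_eq : w x = 0 := by linarith
    exact ⟨by linarith, by linarith⟩
  · -- main case
    obtain ⟨hconsub, hlapu, hlapw⟩ := hsub
    obtain ⟨hconsup, hlapu', hlapw'⟩ := hsup
    have hKc : IsCompact (closure Ω) := hbdd.isCompact_closure
    have hne : (closure Ω).Nonempty := hconn.nonempty.closure
    obtain ⟨z₁, hz₁, hmax₁⟩ := hKc.exists_isMaxOn hne (hu.sub hu')
    obtain ⟨z₂, hz₂, hmax₂⟩ := hKc.exists_isMaxOn hne (hw.sub hw')
    have hmax₁' : ∀ y ∈ closure Ω, u y - u' y ≤ u z₁ - u' z₁ := fun y hy =>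
      isMaxOn_iff.mp hmax₁ y hy
    have hmax₂' : ∀ y ∈ closure Ω, w y - w' y ≤ w z₂ - w' z₂ := fun y hy =>
      isMaxOn_iff.mp hmax₂ y hy
    have hkey : u z₁ - u' z₁ ≤ 0 ∧ w z₂ - w' z₂ ≤ 0 := by
      rcases le_total (u z₁ - u' z₁) (w z₂ - w' z₂) with hle | hle
      · have h2 : w z₂ - w' z₂ ≤ 0 := by
          by_contra h
          push_neg at h
          exact StmtAux.key hd hΩ hbdd hw hu hw'
            (fun x hx => (hconsup x hx).2.2.2)
            hlapw hlapw' (fun x hx => (hbdry x hx).2) hz₂ hmax₂'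
            (fun y hy => le_trans (hmax₁' y (subset_closure hy)) hle) h
        exact ⟨le_trans hle h2, h2⟩
      · have h1 : u z₁ - u' z₁ ≤ 0 := by
          by_contra h
          push_neg at h
          exact StmtAux.key hd hΩ hbdd hu hw hu'
            (fun x hx => (hconsup x hx).2.2.1)
            hlapu hlapu' (fun x hx => (hbdry x hx).1) hz₁ hmax₁'
            (fun y hy => le_trans (hmax₂' y (subset_closure hy)) hle) h
        exact ⟨h1, le_trans hle h1⟩
    intro x hx
    constructor
    · have := hmax₁' x (subset_closure hx)
      linarith [hkey.1]
    · have := hmax₂' x (subset_closure hx)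
      linarith [hkey.2]
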